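/- Let n ≥ 1 and let N₁, N₂, N₃, N₄, N₅ be pairwise commuting nilpotent n×n complex matrices satisfying exp(N₁)² = exp(N₂), exp(N₂)² = exp(N₁)·exp(N₃), exp(N₃)² = exp(N₂)·exp(N₄), and exp(N₄)² = exp(N₃)·exp(N₅), where exp denotes the matrix exponential. Then N_k = k·N₁ for every k = 1,…,5; in particular all five matrices are rational multiples of N₁. -/

import Mathlib

open NormedSpace

private lemma aux_exp_nilpotent_eq_one {n : ℕ} {A : Matrix (Fin n) (Fin n) ℂ}
    (hA : IsNilpotent A) (h : exp A = 1) : A = 0 := by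
  letI : SeminormedRing (Matrix (Fin n) (Fin n) ℂ) := Matrix.linftyOpSemiNormedRing
  letI : NormedRing (Matrix (Fin n) (Fin n) ℂ) := Matrix.linftyOpNormedRing
  letI : NormedAlgebra ℂ (Matrix (Fin n) (Fin n) ℂ) := Matrix.linftyOpNormedAlgebra
  obtain ⟨m, hm⟩ := hA
  have hpow : ∀ k, m ≤ k → A ^ k = 0 := fun k hk => by
    rw [← Nat.sub_add_cancel hk, pow_add, hm, mul_zero]
  have hsum : exp A = ∑ k ∈ Finset.range (m + 1), ((Nat.factorial k : ℂ))⁻¹ • A ^ k := by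
    rw [exp_eq_tsum (𝕂 := ℂ)]
    exact tsum_eq_sum fun k hk => by
      rw [hpow k (le_of_lt (Nat.lt_of_succ_le (le_of_not_gt (fun hlt =>
        hk (Finset.mem_range.mpr hlt))))), smul_zero]
  match m, hm, hpow, hsum with
  | 0, hm, _, _ =>
    haveI : Subsingleton (Matrix (Fin n) (Fin n) ℂ) :=
      subsingleton_of_zero_eq_one (by simpa using hm.symm)
    exact Subsingleton.elim _ _
  | (j + 1), hm, hpow, hsum =>
    set Q : Matrix (Fin n) (Fin n) ℂ :=
      ∑ k ∈ Finset.range (j + 1), ((Nat.factorial (k + 1) : ℂ))⁻¹ • A ^ k with hQ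
    have hterm : (∑ k ∈ Finset.range (j + 1),
        ((Nat.factorial (k + 1) : ℂ))⁻¹ • A ^ (k + 1)) = A * Q := by
      rw [hQ, Finset.mul_sum]
      refine Finset.sum_congr rfl fun k _ => ?_
      rw [mul_smul_comm, ← pow_succ']
    have hexp : exp A = 1 + A * Q := by
      rw [hsum, Finset.sum_range_succ', hterm]
      simp [add_comm]
    have hAQ : A * Q = 0 := by
      have := hexp.symm.trans h
      rwa [add_eq_left] at this
    -- Q = 1 + A * R with A * R nilpotent
    set R : Matrix (Fin n) (Fin n) ℂ :=
      ∑ k ∈ Finset.range j, ((Nat.factorial (k + 2) : ℂ))⁻¹ • A ^ k with hR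
    have hterm2 : (∑ k ∈ Finset.range j,
        ((Nat.factorial (k + 1 + 1) : ℂ))⁻¹ • A ^ (k + 1)) = A * R := by
      rw [hR, Finset.mul_sum]
      refine Finset.sum_congr rfl fun k _ => ?_
      rw [mul_smul_comm, ← pow_succ']
    have hQ1 : Q = 1 + A * R := by
      rw [hQ, Finset.sum_range_succ', hterm2]
      simp [add_comm]
    have hcommAR : Commute A R := by
      rw [hR]
      exact Commute.sum_right _ _ _ fun k _ =>
        ((Commute.refl A).pow_right k).smul_right _
    have hnilAR : IsNilpotent (A * R) :=
      Commute.isNilpotent_mul_right hcommAR ⟨j + 1, hm⟩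
    have hQunit : IsUnit Q := hQ1 ▸ hnilAR.isUnit_one_add
    obtain ⟨u, hu⟩ := hQunit
    calc A = A * (↑u * ↑u⁻¹) := by rw [Units.mul_inv, mul_one]
    _ = (A * Q) * ↑u⁻¹ := by rw [← mul_assoc, hu]
    _ = 0 := by rw [hAQ, zero_mul]

private lemma aux_exp_inj {n : ℕ} {A B : Matrix (Fin n) (Fin n) ℂ}
    (hA : IsNilpotent A) (hB : IsNilpotent B) (hc : Commute A B)
    (h : exp A = exp B) : A = B := by
  have hsub : IsNilpotent (A - B) := hc.isNilpotent_sub hA hB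
  have hmul : exp (A - B) * exp B = exp B := by
    rw [← Matrix.exp_add_of_commute (A - B) B (hc.sub_left (Commute.refl B)),
      sub_add_cancel, h]
  have h1 : exp (A - B) = 1 := by
    obtain ⟨u, hu⟩ := Matrix.isUnit_exp B
    calc exp (A - B) = (exp (A - B) * ↑u) * ↑u⁻¹ := by
          rw [mul_assoc, Units.mul_inv, mul_one]
    _ = exp B * ↑u⁻¹ := by rw [hu, hmul]
    _ = 1 := by rw [← hu, Units.mul_inv]
  exact sub_eq_zero.mp (aux_exp_nilpotent_eq_one hsub h1)

theorem stmt_1 (n : ℕ) (hn : 1 ≤ n)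
    (N₁ N₂ N₃ N₄ N₅ : Matrix (Fin n) (Fin n) ℂ)
    (hnil : ∀ X ∈ [N₁, N₂, N₃, N₄, N₅], IsNilpotent X)
    (hcomm : ∀ X ∈ [N₁, N₂, N₃, N₄, N₅], ∀ Y ∈ [N₁, N₂, N₃, N₄, N₅], Commute X Y)
    (h1 : exp N₁ ^ 2 = exp N₂)
    (h2 : exp N₂ ^ 2 = exp N₁ * exp N₃)
    (h3 : exp N₃ ^ 2 = exp N₂ * exp N₄)
    (h4 : exp N₄ ^ 2 = exp N₃ * exp N₅) :
    N₁ = (1 : ℂ) • N₁ ∧ N₂ = (2 : ℂ) • N₁ ∧ N₃ = (3 : ℂ) • N₁ ∧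
      N₄ = (4 : ℂ) • N₁ ∧ N₅ = (5 : ℂ) • N₁ := by
  have hkey : ∀ k : ℕ, exp ((k : ℂ) • N₁) = exp N₁ ^ k := fun k => by
    rw [Nat.cast_smul_eq_nsmul, Matrix.exp_nsmul]
  have hnil1 : IsNilpotent N₁ := hnil N₁ (by simp)
  have hsmulnil : ∀ c : ℂ, IsNilpotent (c • N₁) := fun c => (hnil1).smul c
  have he : IsUnit (exp N₁) := Matrix.isUnit_exp N₁
  have solve : ∀ (M : Matrix (Fin n) (Fin n) ℂ) (k : ℕ),
      M ∈ [N₁, N₂, N₃, N₄, N₅] → exp M = exp N₁ ^ k → M = (k : ℂ) • N₁ := by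
    intro M k hM hexp
    refine (aux_exp_inj (hsmulnil _) (hnil M hM)
      (((hcomm N₁ (by simp) M hM).symm).smul_right _).symm ?_).symm
    rw [hkey, hexp]
  have hN2 : N₂ = (2 : ℂ) • N₁ := by
    refine solve N₂ 2 (by simp) ?_
    exact h1.symm
  have hexp2 : exp N₂ = exp N₁ ^ 2 := h1.symm
  have hexp3 : exp N₃ = exp N₁ ^ 3 := by
    apply he.mul_left_cancel
    rw [← h2, hexp2, ← pow_mul, ← pow_succ']
  have hexp4 : exp N₄ = exp N₁ ^ 4 := by
    have h2u : IsUnit (exp N₁ ^ 2) := he.pow 2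
    apply h2u.mul_left_cancel
    rw [← hexp2, ← h3, hexp3, hexp2, ← pow_mul, ← pow_add]
  have hexp5 : exp N₅ = exp N₁ ^ 5 := by
    have h3u : IsUnit (exp N₁ ^ 3) := he.pow 3
    apply h3u.mul_left_cancel
    rw [← hexp3, ← h4, hexp4, hexp3, ← pow_mul, ← pow_add]
  refine ⟨by rw [one_smul], hN2, ?_, ?_, ?_⟩
  · exact solve N₃ 3 (by simp) hexp3
  · exact solve N₄ 4 (by simp) hexp4
  · exact solve N₅ 5 (by simp) hexp5
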